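/- Let g ≥ 1 be an integer, let e_1, …, e_{2g+2} be complex numbers, let f(x) = ∏_{m=1}^{2g+2} (x − e_m) = ∑_{k=0}^{2g+2} λ_k x^k, let N_g = C(2g+1, g), and let R(x) = ∑_{i=1}^{g} ∑_{k=i}^{2g+1−i} (k+1−i) λ_{k+1+i} x^{k+i−1}. Then for every x ∈ ℂ with f(x) ≠ 0: N_g · (2 f(x) f″(x) − f′(x)²)/(4 f(x)) − N_g · R(x) + (f(x)/8) · ∑_S ( 2 ∑_{i∈S} 1/(x − e_i) − f′(x)/f(x) )² = (N_g/(4g+2)) · ∑_{k=2}^{2g} ( k(2g+2−k)/2 + ((2g+1)/4)((−1)^k − 1) ) λ_k x^{k−2}, where ∑_S ranges over all (g+1)-element subsets S of {1, …, 2g+2}. -/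

import Mathlib

open Finset


lemma count_supersets {α : Type*} [DecidableEq α] (u T : Finset α) (hT : T ⊆ u)
    (r : ℕ) (hr : T.card ≤ r) :
    ((u.powersetCard r).filter (fun S => T ⊆ S)).card
      = (u.card - T.card).choose (r - T.card) := by
  rw [← card_sdiff_of_subset hT, ← card_powersetCard (r - T.card) (u \ T)]
  apply Finset.card_bij' (fun S _ => S \ T) (fun W _ => W ∪ T)
  · intro S hS
    simp only [mem_filter, mem_powersetCard] at hS
    obtain ⟨⟨hSu, hScard⟩, hTS⟩ := hS
    simp only [mem_powersetCard]
    exact ⟨sdiff_subset_sdiff hSu (le_refl T), by rw [card_sdiff_of_subset hTS, hScard]⟩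
  · intro W hW
    simp only [mem_powersetCard] at hW
    obtain ⟨hWu, hWcard⟩ := hW
    have hWT : Disjoint W T := disjoint_of_subset_left hWu sdiff_disjoint
    simp only [mem_filter, mem_powersetCard]
    refine ⟨⟨union_subset (hWu.trans (sdiff_subset)) hT, ?_⟩, subset_union_right⟩
    rw [card_union_of_disjoint hWT, hWcard]
    omega
  · intro S hS
    simp only [mem_filter, mem_powersetCard] at hS
    exact sdiff_union_of_subset hS.2
  · intro W hW
    simp only [mem_powersetCard] at hW
    have hWT : Disjoint W T := disjoint_of_subset_left hW.1 sdiff_disjoint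
    rw [union_sdiff_right, sdiff_eq_self_of_disjoint hWT]

lemma count_mem {α : Type*} [DecidableEq α] [Fintype α] (r : ℕ) (hr : 1 ≤ r) (i : α) :
    (((univ : Finset α).powersetCard r).filter (fun S => i ∈ S)).card
      = (Fintype.card α - 1).choose (r - 1) := by
  have h : ((univ : Finset α).powersetCard r).filter (fun S => i ∈ S)
      = ((univ : Finset α).powersetCard r).filter (fun S => {i} ⊆ S) := by
    apply filter_congr; intro S _; simp
  rw [h]
  have := count_supersets (univ : Finset α) {i} (subset_univ _) r (by simpa using hr)
  simpa using this

lemma count_pair {α : Type*} [DecidableEq α] [Fintype α] (r : ℕ) (hr : 2 ≤ r)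
    (i j : α) (hij : i ≠ j) :
    (((univ : Finset α).powersetCard r).filter (fun S => i ∈ S ∧ j ∈ S)).card
      = (Fintype.card α - 2).choose (r - 2) := by
  have h : ((univ : Finset α).powersetCard r).filter (fun S => i ∈ S ∧ j ∈ S)
      = ((univ : Finset α).powersetCard r).filter (fun S => {i, j} ⊆ S) := by
    apply filter_congr; intro S _; simp [insert_subset_iff]
  rw [h]
  have hcard : ({i, j} : Finset α).card = 2 := card_pair hij
  have := count_supersets (univ : Finset α) {i, j} (subset_univ _) r (by omega)
  rw [this, hcard]
  simp

lemma sum1 {α : Type*} [DecidableEq α] [Fintype α] (r : ℕ) (hr : 1 ≤ r) (F : α → ℂ) :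
    ∑ S ∈ (univ : Finset α).powersetCard r, ∑ i ∈ S, F i
      = ((Fintype.card α - 1).choose (r - 1) : ℂ) * ∑ i, F i := by
  have key : ∀ S ∈ (univ : Finset α).powersetCard r,
      ∑ i ∈ S, F i = ∑ i ∈ univ, if i ∈ S then F i else 0 := by
    intro S _; rw [Finset.sum_ite_mem, univ_inter]
  rw [Finset.sum_congr rfl key, Finset.sum_comm, Finset.mul_sum]
  apply Finset.sum_congr rfl
  intro i _
  rw [← Finset.sum_filter, Finset.sum_const, count_mem r hr i, nsmul_eq_mul]

lemma sum2 {α : Type*} [DecidableEq α] [Fintype α] (r : ℕ) (hr : 2 ≤ r) (F : α → ℂ) :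
    ∑ S ∈ (univ : Finset α).powersetCard r, (∑ i ∈ S, F i) ^ 2
      = ((Fintype.card α - 2).choose (r - 2) : ℂ) * (∑ i, F i) ^ 2
        + (((Fintype.card α - 1).choose (r - 1) : ℂ)
            - ((Fintype.card α - 2).choose (r - 2) : ℂ)) * ∑ i, (F i) ^ 2 := by
  set C1 : ℂ := ((Fintype.card α - 1).choose (r - 1) : ℂ)
  set C2 : ℂ := ((Fintype.card α - 2).choose (r - 2) : ℂ)
  have key : ∀ S ∈ (univ : Finset α).powersetCard r,
      (∑ i ∈ S, F i) ^ 2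
        = ∑ i ∈ univ, ∑ j ∈ univ, if i ∈ S ∧ j ∈ S then F i * F j else 0 := by
    intro S _
    rw [sq, Finset.sum_mul_sum]
    symm
    calc ∑ i ∈ univ, ∑ j ∈ univ, (if i ∈ S ∧ j ∈ S then F i * F j else 0)
        = ∑ i ∈ univ, (if i ∈ S then ∑ j ∈ univ, (if j ∈ S then F i * F j else 0) else 0) := by
          apply Finset.sum_congr rfl; intro i _
          by_cases hi : i ∈ S <;> simp [hi]
      _ = ∑ i ∈ S, ∑ j ∈ S, F i * F j := by
          rw [Finset.sum_ite_mem, univ_inter]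
          apply Finset.sum_congr rfl; intro i _
          rw [Finset.sum_ite_mem, univ_inter]
  rw [Finset.sum_congr rfl key, Finset.sum_comm]
  have swap2 : ∀ i : α, ∑ S ∈ (univ : Finset α).powersetCard r,
      ∑ j ∈ univ, (if i ∈ S ∧ j ∈ S then F i * F j else 0)
      = ∑ j ∈ univ, ∑ S ∈ (univ : Finset α).powersetCard r,
          (if i ∈ S ∧ j ∈ S then F i * F j else 0) := fun i => Finset.sum_comm
  rw [Finset.sum_congr rfl (fun i _ => swap2 i)]
  have per : ∀ i j : α, (∑ S ∈ (univ : Finset α).powersetCard r,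
      (if i ∈ S ∧ j ∈ S then F i * F j else 0))
      = (C2 + if i = j then C1 - C2 else 0) * (F i * F j) := by
    intro i j
    rw [← Finset.sum_filter, Finset.sum_const, nsmul_eq_mul]
    by_cases hij : i = j
    · subst hij
      have : ((univ : Finset α).powersetCard r).filter (fun S => i ∈ S ∧ i ∈ S)
          = ((univ : Finset α).powersetCard r).filter (fun S => i ∈ S) := by
        apply filter_congr; intro S _; simp
      rw [this, count_mem r (by omega) i, if_pos rfl]
      ring
    · rw [count_pair r hr i j hij, if_neg hij]
      ring
  rw [Finset.sum_congr rfl (fun i _ => Finset.sum_congr rfl (fun j _ => per i j))]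
  have expand : ∀ i j : α, (C2 + if i = j then C1 - C2 else 0) * (F i * F j)
      = C2 * (F i * F j) + (if i = j then (C1 - C2) * (F i * F j) else 0) := by
    intro i j; by_cases hij : i = j <;> simp [hij] <;> ring
  rw [Finset.sum_congr rfl (fun i _ => Finset.sum_congr rfl (fun j _ => expand i j))]
  simp_rw [Finset.sum_add_distrib]
  have h1 : ∑ i : α, ∑ j : α, C2 * (F i * F j) = C2 * (∑ i, F i) ^ 2 := by
    rw [sq, Finset.sum_mul_sum, Finset.mul_sum]
    apply Finset.sum_congr rfl; intro i _
    rw [Finset.mul_sum]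
  have h2 : ∀ i : α, (∑ j : α, if i = j then (C1 - C2) * (F i * F j) else 0)
      = (C1 - C2) * (F i) ^ 2 := by
    intro i
    rw [Finset.sum_ite_eq univ i (fun j => (C1 - C2) * (F i * F j)), if_pos (mem_univ i)]
    ring
  rw [h1, Finset.sum_congr rfl (fun i _ => h2 i), ← Finset.mul_sum]

lemma gauss_sum (n : ℂ) : ∀ M : ℕ, ∑ i ∈ Icc 1 M, (n - 2 * (i:ℂ)) = M * n - M * (M + 1) := by
  intro M
  induction M with
  | zero => simp
  | succ M ih =>
    rw [Finset.sum_Icc_succ_top (by omega : 1 ≤ M + 1), ih]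
    push_cast; ring

lemma choose_rel (g : ℕ) (hg : 1 ≤ g) :
    (2 * g + 1) * Nat.choose (2 * g) (g - 1) = g * Nat.choose (2 * g + 1) g := by
  obtain ⟨q, rfl⟩ : ∃ q, g = q + 1 := ⟨g - 1, by omega⟩
  have h1 : Nat.choose (2 * (q+1)) (q+1) * (q+1) = Nat.choose (2 * (q+1)) q * (2 * (q+1) - q) :=
    Nat.choose_succ_right_eq (2 * (q+1)) q
  have h2 : Nat.choose (2 * (q+1) + 1) (q + 1)
      = Nat.choose (2 * (q+1)) q + Nat.choose (2 * (q+1)) (q+1) := Nat.choose_succ_succ _ _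
  have h3 : 2 * (q+1) - q = q + 2 := by omega
  rw [h3] at h1
  simp only [Nat.add_sub_cancel]
  nlinarith [h1, h2]

lemma choose_top (g : ℕ) :
    Nat.choose (2 * g + 2) (g + 1) = 2 * Nat.choose (2 * g + 1) g := by
  have h2 : Nat.choose (2 * g + 2) (g + 1)
      = Nat.choose (2 * g + 1) g + Nat.choose (2 * g + 1) (g + 1) := Nat.choose_succ_succ _ _
  have h3 : Nat.choose (2 * g + 1) (g + 1) = Nat.choose (2 * g + 1) g := by
    have := Nat.choose_symm (by omega : g + 1 ≤ 2 * g + 1)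
    have h4 : 2 * g + 1 - (g + 1) = g := by omega
    rw [h4] at this
    exact this.symm
  omega

lemma final_poly (g : ℕ) (hg : 1 ≤ g) (lam : ℕ → ℂ) (x : ℂ) :
    ((Nat.choose (2 * g) (g - 1) : ℂ) / 2) *
        (∑ k ∈ Finset.range (2 * g + 3), lam k * ((k : ℂ) * (((k - 1 : ℕ) : ℂ) * x ^ (k - 2))))
      - (Nat.choose (2 * g + 1) g : ℂ) *
          (∑ i ∈ Finset.Icc 1 g, ∑ k ∈ Finset.Icc i (2 * g + 1 - i),
            ((k : ℂ) + 1 - (i : ℂ)) * lam (k + 1 + i) * x ^ (k + i - 1))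
      = ((Nat.choose (2 * g + 1) g : ℂ) / (4 * (g : ℂ) + 2)) *
          ∑ k ∈ Finset.Icc 2 (2 * g),
            ((k : ℂ) * (2 * (g : ℂ) + 2 - (k : ℂ)) / 2
              + ((2 * (g : ℂ) + 1) / 4) * ((-1 : ℂ) ^ k - 1)) * lam k * x ^ (k - 2) := by
  set C1 : ℂ := (Nat.choose (2 * g + 1) g : ℂ) with hC1def
  set C2 : ℂ := (Nat.choose (2 * g) (g - 1) : ℂ) with hC2def
  -- Step A : restrict the f'' sum to Icc 2 (2g+2)
  have stepA : (∑ k ∈ Finset.range (2 * g + 3), lam k * ((k : ℂ) * (((k - 1 : ℕ) : ℂ) * x ^ (k - 2))))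
      = ∑ k ∈ Finset.Icc 2 (2 * g + 2), lam k * ((k : ℂ) * (((k - 1 : ℕ) : ℂ) * x ^ (k - 2))) := by
    symm
    apply Finset.sum_subset
    · intro k hk; simp only [mem_Icc] at hk; simp only [mem_range]; omega
    · intro k hk1 hk2
      simp only [mem_range] at hk1; simp only [mem_Icc] at hk2
      have : k = 0 ∨ k = 1 := by omega
      rcases this with rfl | rfl <;> simp
  -- Step B : reindex the R double sum
  have stepB : (∑ i ∈ Finset.Icc 1 g, ∑ k ∈ Finset.Icc i (2 * g + 1 - i),
        ((k : ℂ) + 1 - (i : ℂ)) * lam (k + 1 + i) * x ^ (k + i - 1))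
      = ∑ n ∈ Finset.Icc 2 (2 * g + 2), ∑ i ∈ Finset.Icc 1 (min g ((n - 1) / 2)),
          ((n : ℂ) - 2 * (i : ℂ)) * lam n * x ^ (n - 2) := by
    rw [Finset.sum_sigma', Finset.sum_sigma']
    apply Finset.sum_nbij' (fun p => (⟨p.2 + 1 + p.1, p.1⟩ : Σ _ : ℕ, ℕ))
      (fun p => (⟨p.2, p.1 - 1 - p.2⟩ : Σ _ : ℕ, ℕ))
    · intro p hp
      simp only [mem_sigma, mem_Icc] at hp ⊢
      omega
    · intro p hp
      simp only [mem_sigma, mem_Icc] at hp ⊢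
      omega
    · intro p hp
      simp only [mem_sigma, mem_Icc] at hp
      ext <;> simp <;> omega
    · intro p hp
      simp only [mem_sigma, mem_Icc] at hp
      ext <;> simp <;> omega
    · intro p hp
      simp only [mem_sigma, mem_Icc] at hp
      obtain ⟨⟨h1, h2⟩, h3, h4⟩ := hp
      have e1 : p.2 + 1 + p.1 - 2 = p.2 + p.1 - 1 := by omega
      have e2 : ((p.2 + 1 + p.1 : ℕ) : ℂ) - 2 * (p.1 : ℂ) = (p.2 : ℂ) + 1 - (p.1 : ℂ) := by
        push_cast; ring
      rw [e1, e2]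
  -- Step C : extend the RHS sum to Icc 2 (2g+2)
  have stepC : (∑ k ∈ Finset.Icc 2 (2 * g),
        ((k : ℂ) * (2 * (g : ℂ) + 2 - (k : ℂ)) / 2
          + ((2 * (g : ℂ) + 1) / 4) * ((-1 : ℂ) ^ k - 1)) * lam k * x ^ (k - 2))
      = ∑ k ∈ Finset.Icc 2 (2 * g + 2),
        ((k : ℂ) * (2 * (g : ℂ) + 2 - (k : ℂ)) / 2
          + ((2 * (g : ℂ) + 1) / 4) * ((-1 : ℂ) ^ k - 1)) * lam k * x ^ (k - 2) := by
    apply Finset.sum_subset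
    · intro k hk; simp only [mem_Icc] at hk ⊢; omega
    · intro k hk1 hk2
      simp only [mem_Icc] at hk1 hk2
      have hk : k = 2 * g + 1 ∨ k = 2 * g + 2 := by omega
      rcases hk with rfl | rfl
      · have hodd : (-1 : ℂ) ^ (2 * g + 1) = -1 := Odd.neg_one_pow ⟨g, by omega⟩
        rw [hodd]
        have : ((2 * g + 1 : ℕ) : ℂ) = 2 * (g : ℂ) + 1 := by push_cast; ring
        rw [this]
        ring_nf
      · have heven : (-1 : ℂ) ^ (2 * g + 2) = 1 := Even.neg_one_pow ⟨g + 1, by omega⟩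
        rw [heven]
        have : ((2 * g + 2 : ℕ) : ℂ) = 2 * (g : ℂ) + 2 := by push_cast; ring
        rw [this]
        ring_nf
  rw [stepA, stepB, stepC, Finset.mul_sum, Finset.mul_sum, Finset.mul_sum, ← Finset.sum_sub_distrib]
  apply Finset.sum_congr rfl
  intro n hn
  simp only [mem_Icc] at hn
  obtain ⟨hn2, hn22⟩ := hn
  rw [← Finset.sum_mul, ← Finset.sum_mul, gauss_sum (n : ℂ) (min g ((n - 1) / 2))]
  set M := min g ((n - 1) / 2) with hM
  have hC2rel : C2 * (2 * (g : ℂ) + 1) = (g : ℂ) * C1 := by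
    have hc := choose_rel g hg
    have hc' := congrArg (fun m : ℕ => (m : ℂ)) hc
    push_cast at hc'
    rw [hC1def, hC2def]
    linear_combination hc'
  have h2g1 : (2 * (g : ℂ) + 1) ≠ 0 := by
    have : ((2 * g + 1 : ℕ) : ℂ) ≠ 0 := Nat.cast_ne_zero.mpr (by omega)
    push_cast at this
    convert this using 2
  have h4g2 : (4 * (g : ℂ) + 2) ≠ 0 := by
    have : ((4 * g + 2 : ℕ) : ℂ) ≠ 0 := Nat.cast_ne_zero.mpr (by omega)
    push_cast at this
    convert this using 2
  have hC2eq : C2 = (g : ℂ) * C1 / (2 * (g : ℂ) + 1) := by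
    rw [eq_div_iff h2g1]
    linear_combination hC2rel
  rcases Nat.even_or_odd n with ⟨p, hp⟩ | ⟨p, hp⟩
  · -- n even
    obtain ⟨q, rfl⟩ : ∃ q, p = q + 1 := ⟨p - 1, by omega⟩
    subst hp
    have hMq : M = q := by rw [hM]; omega
    have h1 : (q + 1) + (q + 1) - 1 = 2 * q + 1 := by omega
    have h2 : (-1 : ℂ) ^ ((q + 1) + (q + 1)) = 1 := Even.neg_one_pow ⟨q + 1, rfl⟩
    rw [hMq, h1, h2, hC2eq]
    push_cast
    have h4 : (4 * (g : ℂ) + 2) = 2 * (2 * (g : ℂ) + 1) := by ring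
    rw [h4]
    have h2g1' : (g : ℂ) * 2 + 1 ≠ 0 := by rwa [mul_comm]
    field_simp
    ring
  · -- n odd
    subst hp
    have hp1 : 1 ≤ p := by omega
    have hMp : M = p := by rw [hM]; omega
    have h1 : 2 * p + 1 - 1 = 2 * p := by omega
    have h2 : (-1 : ℂ) ^ (2 * p + 1) = -1 := Odd.neg_one_pow ⟨p, by omega⟩
    rw [hMp, h1, h2, hC2eq]
    push_cast
    have h4 : (4 * (g : ℂ) + 2) = 2 * (2 * (g : ℂ) + 1) := by ring
    rw [h4]
    have h2g1' : (g : ℂ) * 2 + 1 ≠ 0 := by rwa [mul_comm]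
    field_simp
    ring

section derivs
variable {g : ℕ} (e : Fin (2 * g + 2) → ℂ)

lemma prod_hasDerivAt (y : ℂ) :
    HasDerivAt (fun x => ∏ m, (x - e m)) (∑ i, ∏ m ∈ univ.erase i, (y - e m)) y := by
  have h := HasDerivAt.fun_finsetProd (u := (univ : Finset (Fin (2 * g + 2))))
    (f := fun m (x : ℂ) => x - e m) (f' := fun _ => (1 : ℂ)) (x := y)
    (fun i _ => (hasDerivAt_id y).sub_const (e i))
  simpa using h

lemma sum_prod_hasDerivAt (y : ℂ) :
    HasDerivAt (fun x => ∑ i, ∏ m ∈ univ.erase i, (x - e m))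
      (∑ i, ∑ j ∈ univ.erase i, ∏ m ∈ (univ.erase i).erase j, (y - e m)) y := by
  apply HasDerivAt.fun_sum
  intro i _
  have h := HasDerivAt.fun_finsetProd (u := (univ : Finset (Fin (2 * g + 2))).erase i)
    (f := fun m (x : ℂ) => x - e m) (f' := fun _ => (1 : ℂ)) (x := y)
    (fun j _ => (hasDerivAt_id y).sub_const (e j))
  simpa using h

end derivs

/-- rational-function form of the anti-diagonal-sum lemma (Lemma 5.2 of the
paper): with `f(x) = ∏ (x − e_m) = ∑ λ_k x^k`, `N_g = C(2g+1,g)` and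
`R(x) = ∑_{i=1}^{g} ∑_{k=i}^{2g+1−i} (k+1−i) λ_{k+1+i} x^{k+i−1}`, one has
`N_g (2ff″ − f′²)/(4f) − N_g R + (f/8) ∑_S (2∑_{i∈S} 1/(x−e_i) − f′/f)²
  = (N_g/(4g+2)) ∑_{k=2}^{2g} (k(2g+2−k)/2 + ((2g+1)/4)((−1)^k − 1)) λ_k x^{k−2}`. -/
theorem residual_matrix_quadratic_form_identity
    (g : ℕ) (hg : 1 ≤ g) (e : Fin (2 * g + 2) → ℂ)
    (f : ℂ → ℂ) (hf : f = fun x => ∏ m, (x - e m))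
    (lam : ℕ → ℂ)
    (hlam : ∀ x : ℂ, f x = ∑ k ∈ Finset.range (2 * g + 3), lam k * x ^ k)
    (x : ℂ) (hx : f x ≠ 0) :
    (Nat.choose (2 * g + 1) g : ℂ) *
        (2 * f x * deriv (deriv f) x - (deriv f x) ^ 2) / (4 * f x)
      - (Nat.choose (2 * g + 1) g : ℂ) *
          (∑ i ∈ Finset.Icc 1 g, ∑ k ∈ Finset.Icc i (2 * g + 1 - i),
            ((k : ℂ) + 1 - (i : ℂ)) * lam (k + 1 + i) * x ^ (k + i - 1))
      + (f x / 8) *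
          ∑ S ∈ Finset.powersetCard (g + 1) (Finset.univ : Finset (Fin (2 * g + 2))),
            (2 * ∑ i ∈ S, 1 / (x - e i) - deriv f x / f x) ^ 2
      = ((Nat.choose (2 * g + 1) g : ℂ) / (4 * (g : ℂ) + 2)) *
          ∑ k ∈ Finset.Icc 2 (2 * g),
            ((k : ℂ) * (2 * (g : ℂ) + 2 - (k : ℂ)) / 2
              + ((2 * (g : ℂ) + 1) / 4) * ((-1 : ℂ) ^ k - 1)) * lam k * x ^ (k - 2) := by
  -- notation
  set C1 : ℂ := (Nat.choose (2 * g + 1) g : ℂ) with hC1def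
  set C2 : ℂ := (Nat.choose (2 * g) (g - 1) : ℂ) with hC2def
  -- derivatives, product form
  have hd1 : ∀ y : ℂ, HasDerivAt f (∑ i, ∏ m ∈ univ.erase i, (y - e m)) y := by
    intro y; rw [hf]; exact prod_hasDerivAt e y
  have hderiv1 : deriv f = fun y => ∑ i, ∏ m ∈ univ.erase i, (y - e m) :=
    funext fun y => (hd1 y).deriv
  have hd2 : deriv (deriv f) x
      = ∑ i, ∑ j ∈ univ.erase i, ∏ m ∈ (univ.erase i).erase j, (x - e m) := by
    rw [hderiv1]; exact (sum_prod_hasDerivAt e x).deriv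
  -- derivatives, polynomial form
  have hfl : f = fun y => ∑ k ∈ Finset.range (2 * g + 3), lam k * y ^ k := funext hlam
  have hderiv1' : deriv f = fun y => ∑ k ∈ Finset.range (2 * g + 3), lam k * ((k : ℂ) * y ^ (k - 1)) := by
    funext y
    rw [hfl]
    refine (HasDerivAt.fun_sum ?_).deriv
    intro k _
    exact (hasDerivAt_pow k y).const_mul (lam k)
  have hd2' : deriv (deriv f) x
      = ∑ k ∈ Finset.range (2 * g + 3), lam k * ((k : ℂ) * (((k - 1 : ℕ) : ℂ) * x ^ (k - 2))) := by
    rw [hderiv1']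
    refine HasDerivAt.deriv (HasDerivAt.fun_sum ?_)
    intro k _
    have h := ((hasDerivAt_pow (k - 1) x).const_mul ((k : ℕ) : ℂ)).const_mul (lam k)
    simpa [Nat.sub_sub] using h
  -- point algebra
  have hne : ∀ m, x - e m ≠ 0 := by
    intro m hm
    apply hx
    rw [hf]
    exact Finset.prod_eq_zero (mem_univ m) hm
  set s : Fin (2 * g + 2) → ℂ := fun m => (x - e m)⁻¹ with hsdef
  set T : ℂ := ∑ m, s m with hTdef
  set Q : ℂ := ∑ m, s m ^ 2 with hQdef
  have hP : ∀ i, ∏ m ∈ univ.erase i, (x - e m) = f x * s i := by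
    intro i
    have h1 : (x - e i) * ∏ m ∈ univ.erase i, (x - e m) = f x := by
      simp only [hf]
      exact Finset.mul_prod_erase univ (fun m => x - e m) (mem_univ i)
    have h2 : s i = (x - e i)⁻¹ := rfl
    rw [← h1, h2, mul_comm (x - e i), mul_assoc, mul_inv_cancel₀ (hne i), mul_one]
  have hfT : deriv f x = f x * T := by
    rw [hderiv1]
    show (∑ i, ∏ m ∈ univ.erase i, (x - e m)) = f x * T
    rw [Finset.sum_congr rfl (fun i _ => hP i), hTdef, Finset.mul_sum]
  have hDij : ∀ i : Fin (2 * g + 2), ∀ j ∈ univ.erase i,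
      ∏ m ∈ (univ.erase i).erase j, (x - e m) = f x * s i * s j := by
    intro i j hj
    have h1 : (x - e j) * ∏ m ∈ (univ.erase i).erase j, (x - e m)
        = ∏ m ∈ univ.erase i, (x - e m) :=
      Finset.mul_prod_erase (univ.erase i) (fun m => x - e m) hj
    have h2 : (x - e j) * ∏ m ∈ (univ.erase i).erase j, (x - e m) = f x * s i := by
      rw [h1, hP i]
    have h3 : s j = (x - e j)⁻¹ := rfl
    rw [← h2, h3, mul_comm (x - e j), mul_assoc, mul_inv_cancel₀ (hne j), mul_one]
  have hffQ : deriv (deriv f) x = f x * (T ^ 2 - Q) := by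
    rw [hd2]
    calc ∑ i, ∑ j ∈ univ.erase i, ∏ m ∈ (univ.erase i).erase j, (x - e m)
        = ∑ i, ∑ j ∈ univ.erase i, f x * s i * s j :=
          Finset.sum_congr rfl (fun i _ => Finset.sum_congr rfl (hDij i))
      _ = ∑ i, f x * s i * (T - s i) := by
          apply Finset.sum_congr rfl
          intro i _
          rw [← Finset.mul_sum, Finset.sum_erase_eq_sub (mem_univ i), ← hTdef]
      _ = f x * (T ^ 2 - Q) := by
          have expand : ∀ i, f x * s i * (T - s i) = (f x * T) * s i - f x * s i ^ 2 :=
            fun i => by ring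
          rw [Finset.sum_congr rfl (fun i _ => expand i), Finset.sum_sub_distrib,
            ← Finset.mul_sum, ← Finset.mul_sum, ← hTdef, ← hQdef]
          ring
  -- the subset sum
  have hSsum : (∑ S ∈ Finset.powersetCard (g + 1) (Finset.univ : Finset (Fin (2 * g + 2))),
        (2 * ∑ i ∈ S, 1 / (x - e i) - deriv f x / f x) ^ 2)
      = (4 * C2 - 2 * C1) * T ^ 2 + (4 * C1 - 4 * C2) * Q := by
    have hdf : deriv f x / f x = T := by
      rw [hfT, mul_comm, mul_div_assoc, div_self hx, mul_one]
    have hterm : ∀ S ∈ Finset.powersetCard (g + 1) (Finset.univ : Finset (Fin (2 * g + 2))),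
        (2 * ∑ i ∈ S, 1 / (x - e i) - deriv f x / f x) ^ 2
        = 4 * (∑ i ∈ S, s i) ^ 2 - 4 * T * (∑ i ∈ S, s i) + T ^ 2 := by
      intro S _
      rw [hdf]
      have : ∑ i ∈ S, 1 / (x - e i) = ∑ i ∈ S, s i := by
        apply Finset.sum_congr rfl; intro i _; rw [one_div]
      rw [this]; ring
    rw [Finset.sum_congr rfl hterm]
    rw [Finset.sum_add_distrib, Finset.sum_sub_distrib, ← Finset.mul_sum, ← Finset.mul_sum,
      Finset.sum_const, Finset.card_powersetCard, card_univ, Fintype.card_fin]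
    have hs1 := sum1 (α := Fin (2 * g + 2)) (g + 1) (by omega) s
    have hs2 := sum2 (α := Fin (2 * g + 2)) (g + 1) (by omega) s
    simp only [Fintype.card_fin] at hs1 hs2
    have e1 : 2 * g + 2 - 1 = 2 * g + 1 := by omega
    have e2 : g + 1 - 1 = g := by omega
    have e3 : 2 * g + 2 - 2 = 2 * g := by omega
    have e4 : g + 1 - 2 = g - 1 := by omega
    simp only [e1, e2, e3, e4] at hs1 hs2
    rw [hs1, hs2, ← hTdef, ← hQdef, ← hC1def, ← hC2def]
    have hC0 : ((2 * g + 2).choose (g + 1) : ℂ) = 2 * C1 := by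
      rw [hC1def, choose_top g]; push_cast; ring
    rw [nsmul_eq_mul, hC0]
    ring
  -- combine
  rw [hSsum, hffQ, hfT]
  have hmain : C1 * (2 * f x * (f x * (T ^ 2 - Q)) - (f x * T) ^ 2) / (4 * f x)
      - C1 * (∑ i ∈ Finset.Icc 1 g, ∑ k ∈ Finset.Icc i (2 * g + 1 - i),
          ((k : ℂ) + 1 - (i : ℂ)) * lam (k + 1 + i) * x ^ (k + i - 1))
      + (f x / 8) * ((4 * C2 - 2 * C1) * T ^ 2 + (4 * C1 - 4 * C2) * Q)
      = C2 / 2 * (f x * (T ^ 2 - Q))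
        - C1 * (∑ i ∈ Finset.Icc 1 g, ∑ k ∈ Finset.Icc i (2 * g + 1 - i),
          ((k : ℂ) + 1 - (i : ℂ)) * lam (k + 1 + i) * x ^ (k + i - 1)) := by
    field_simp
    ring
  rw [hmain, ← hffQ, hd2']
  exact final_poly g hg lam x
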